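/- Let n ≥ 2. The set E_n := {ε_{i,j} : i, j ∈ [±n], i < j} generates SP_n as a monoid (every signed partition of [±n] is a finite join of elements of E_n), and the cardinality of E_n is n². -/

import Mathlib

instance setoidCommMonoid (α : Type*) : CommMonoid (Setoid α) where
  mul := (· ⊔ ·)
  one := ⊥
  mul_assoc := sup_assoc
  one_mul := bot_sup_eq
  mul_one := sup_bot_eq
  mul_comm := sup_comm

def muSet {α : Type*} (X : Set α) : Setoid α :=
  Relation.EqvGen.setoid (fun x y => x ∈ X ∧ y ∈ X)

def mu {α : Type*} (i j : α) : Setoid α := muSet {i, j}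

/-- `[±n]`: nonzero integers of absolute value at most `n`, with the order from `ℤ`. -/
abbrev PM (n : ℕ) := {k : ℤ // k ≠ 0 ∧ |k| ≤ (n : ℤ)}

namespace PM

/-- The negation involution `k ↦ -k` on `[±n]`. -/
def neg {n : ℕ} (x : PM n) : PM n :=
  ⟨-x.1, by obtain ⟨h1, h2⟩ := x.2; exact ⟨neg_ne_zero.mpr h1, by rwa [abs_neg]⟩⟩

@[simp] theorem neg_neg {n : ℕ} (x : PM n) : x.neg.neg = x := Subtype.ext (by simp [neg])

theorem neg_lt_neg {n : ℕ} {x y : PM n} (h : x < y) : y.neg < x.neg := by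
  have h' : x.1 < y.1 := Subtype.coe_lt_coe.mpr h
  rw [← Subtype.coe_lt_coe]
  show -y.1 < -x.1
  omega

theorem neg_lt_pos {n : ℕ} {x y : PM n} (hx : 0 < x.1) (hy : 0 < y.1) : x.neg < y := by
  rw [← Subtype.coe_lt_coe]
  show -x.1 < y.1
  omega

theorem pos_ne_neg {n : ℕ} {x y : PM n} (hx : 0 < x.1) (hy : 0 < y.1) : y ≠ x.neg := by
  intro h
  have : y.1 = -x.1 := congrArg Subtype.val h
  omega

theorem neg_lt_self {n : ℕ} {x : PM n} (hx : 0 < x.1) : x.neg < x := neg_lt_pos hx hx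

/-- The absolute value map `x ↦ |x|` from `[±n]` to its positive part. -/
def abs {n : ℕ} (x : PM n) : PM n :=
  ⟨|x.1|, by obtain ⟨h1, h2⟩ := x.2; exact ⟨abs_ne_zero.mpr h1, by rwa [abs_abs]⟩⟩

end PM

/-- Image of a subset of `[±n]` under negation. -/
def negSet {n : ℕ} (K : Set (PM n)) : Set (PM n) := PM.neg '' K

/-- The partition `I⁻` transported along negation: `x ∼ y` in `negPart I` iff `-x ∼ -y` in `I`. -/
def negPart {n : ℕ} (I : Setoid (PM n)) : Setoid (PM n) := Setoid.comap PM.neg I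

/-- A set partition `I` of `[±n]` is *signed* if for every block `K` of `I` the set `-K` is
also a block; equivalently, `x ∼ y ↔ -x ∼ -y` for all `x, y`. -/
def IsSigned {n : ℕ} (I : Setoid (PM n)) : Prop :=
  ∀ x y : PM n, I x y ↔ I (PM.neg x) (PM.neg y)

/-- A *zero block* of a partition `I` is a block `K` with `-K = K`. -/
def IsZeroBlock {n : ℕ} (I : Setoid (PM n)) (K : Set (PM n)) : Prop :=
  K ∈ I.classes ∧ negSet K = K

/-- A `Bₙ`-partition: a signed partition of `[±n]` with at most one zero block. -/
def IsBPart {n : ℕ} (I : Setoid (PM n)) : Prop :=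
  IsSigned I ∧ Set.Subsingleton {K | IsZeroBlock I K}

/-- A *restricted* signed partition: all its zero blocks have more than two elements. -/
def IsRestricted {n : ℕ} (I : Setoid (PM n)) : Prop :=
  IsSigned I ∧ ∀ K : Set (PM n), IsZeroBlock I K → 2 < K.ncard

/-- A `Dₙ`-partition: a `Bₙ`-partition whose zero block (if present) has more than two
elements. -/
def IsDPart {n : ℕ} (I : Setoid (PM n)) : Prop :=
  IsBPart I ∧ ∀ K : Set (PM n), IsZeroBlock I K → 2 < K.ncard

/-- For `i < j` in `[±n]`, the signed partition `ε_{i,j} = μ_{-j,-i} ⊔ μ_{i,j}`. -/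
def eps {n : ℕ} (i j : PM n) : Setoid (PM n) := mu (PM.neg j) (PM.neg i) ⊔ mu i j

/-- The generating set `Eₙ = {ε_{i,j} : i, j ∈ [±n], i < j}`. -/
def En (n : ℕ) : Set (Setoid (PM n)) := {x | ∃ i j : PM n, i < j ∧ x = eps i j}

section Aux

open Relation

theorem muSet_rel {α : Type*} {X : Set α} {x y : α} (hx : x ∈ X) (hy : y ∈ X) :
    muSet X x y :=
  Relation.EqvGen.rel _ _ ⟨hx, hy⟩

theorem muSet_le {α : Type*} {X : Set α} {I : Setoid α}
    (h : ∀ x ∈ X, ∀ y ∈ X, I x y) : muSet X ≤ I :=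
  Setoid.eqvGen_le (fun x y hxy => h x hxy.1 y hxy.2)

theorem mu_le {α : Type*} {i j : α} {I : Setoid α} (hij : I i j) : mu i j ≤ I := by
  apply muSet_le
  intro x hx y hy
  simp only [Set.mem_insert_iff, Set.mem_singleton_iff] at hx hy
  rcases hx with rfl | rfl <;> rcases hy with rfl | rfl
  · exact I.refl _
  · exact hij
  · exact I.symm hij
  · exact I.refl _

/-- Explicit description of the relation of `eps i j`. -/
def epsRel {n : ℕ} (i j : PM n) (x y : PM n) : Prop :=
  x = y ∨ ((x = i ∨ x = j) ∧ (y = i ∨ y = j)) ∨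
    ((x = i.neg ∨ x = j.neg) ∧ (y = i.neg ∨ y = j.neg))

theorem epsRel_val {n : ℕ} (i j x y : PM n) :
    epsRel i j x y ↔ (x.1 = y.1 ∨ ((x.1 = i.1 ∨ x.1 = j.1) ∧ (y.1 = i.1 ∨ y.1 = j.1)) ∨
      ((x.1 = -i.1 ∨ x.1 = -j.1) ∧ (y.1 = -i.1 ∨ y.1 = -j.1))) := by
  simp only [epsRel, Subtype.ext_iff, PM.neg]

theorem epsRel_equiv {n : ℕ} (i j : PM n) : Equivalence (epsRel i j) := by
  have hi := i.2.1
  have hj := j.2.1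
  refine ⟨fun x => ?_, fun {x y} h => ?_, fun {x y z} h1 h2 => ?_⟩
  · rw [epsRel_val]; omega
  · rw [epsRel_val] at h ⊢; omega
  · rw [epsRel_val] at h1 h2 ⊢; omega

/-- `eps i j` as a setoid with explicit relation. -/
def epsSetoid {n : ℕ} (i j : PM n) : Setoid (PM n) := ⟨epsRel i j, epsRel_equiv i j⟩

theorem eps_eq_epsSetoid {n : ℕ} (i j : PM n) : eps i j = epsSetoid i j := by
  apply le_antisymm
  · apply sup_le
    · exact mu_le (Or.inr (Or.inr ⟨Or.inr rfl, Or.inl rfl⟩))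
    · exact mu_le (Or.inr (Or.inl ⟨Or.inl rfl, Or.inr rfl⟩))
  · rw [Setoid.le_def]
    intro x y h
    rcases h with rfl | ⟨hx, hy⟩ | ⟨hx, hy⟩
    · exact (eps i j).refl x
    · refine Setoid.le_def.mp le_sup_right (muSet_rel ?_ ?_) <;>
        simp only [Set.mem_insert_iff, Set.mem_singleton_iff] <;> tauto
    · refine Setoid.le_def.mp le_sup_left (muSet_rel ?_ ?_) <;>
        simp only [Set.mem_insert_iff, Set.mem_singleton_iff] <;> tauto

theorem eps_iff {n : ℕ} (i j x y : PM n) : eps i j x y ↔ epsRel i j x y := by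
  rw [eps_eq_epsSetoid]; rfl

@[simp] theorem PM.neg_val {n : ℕ} (x : PM n) : (PM.neg x).1 = -x.1 := rfl

theorem eps_signed {n : ℕ} (i j : PM n) : IsSigned (eps i j) := by
  intro x y
  simp only [eps_iff, epsRel_val, PM.neg_val]
  omega

theorem eps_neg {n : ℕ} (i j : PM n) : eps j.neg i.neg = eps i j := by
  apply Setoid.ext
  intro x y
  simp only [eps_iff, epsRel_val, PM.neg_val, neg_neg]
  omega

end Aux

section Gen

noncomputable instance PM.fintype (n : ℕ) : Fintype (PM n) :=
  Fintype.subtype ((Finset.Icc (-(n : ℤ)) n).filter (· ≠ 0)) (by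
    intro x
    simp only [Finset.mem_filter, Finset.mem_Icc]
    rw [abs_le]
    constructor
    · rintro ⟨h1, h2⟩; exact ⟨h2, h1.1, h1.2⟩
    · rintro ⟨h1, h2⟩; exact ⟨⟨h2.1, h2.2⟩, h1⟩)

theorem eqvGen_neg_map {α : Type*} {r : α → α → Prop} (f : α → α)
    (hf : ∀ x y, r x y → r (f x) (f y)) :
    ∀ x y, Relation.EqvGen r x y → Relation.EqvGen r (f x) (f y) := by
  intro x y h
  induction h with
  | rel a b hab => exact Relation.EqvGen.rel _ _ (hf _ _ hab)
  | refl a => exact Relation.EqvGen.refl _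
  | symm a b _ ih => exact Relation.EqvGen.symm _ _ ih
  | trans a b c _ _ ih1 ih2 => exact Relation.EqvGen.trans _ _ _ ih1 ih2

theorem isSigned_sup {n : ℕ} {I J : Setoid (PM n)} (hI : IsSigned I) (hJ : IsSigned J) :
    IsSigned (I ⊔ J) := by
  have key : ∀ x y : PM n, (I ⊔ J) x y → (I ⊔ J) (PM.neg x) (PM.neg y) := by
    intro x y h
    rw [Setoid.sup_eq_eqvGen] at h ⊢
    exact eqvGen_neg_map PM.neg
      (fun a b hab => hab.elim (fun h' => Or.inl ((hI a b).mp h'))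
        (fun h' => Or.inr ((hJ a b).mp h'))) x y h
  intro x y
  refine ⟨key x y, fun h => ?_⟩
  have := key _ _ h
  rwa [PM.neg_neg, PM.neg_neg] at this

/-- The submonoid of signed partitions. -/
def signedSubmonoid (n : ℕ) : Submonoid (Setoid (PM n)) where
  carrier := {I | IsSigned I}
  one_mem' := by
    intro x y
    show (⊥ : Setoid (PM n)) x y ↔ (⊥ : Setoid (PM n)) _ _
    constructor <;> intro h
    · rw [Setoid.bot_def] at h
      subst h; exact (⊥ : Setoid (PM n)).refl _
    · rw [Setoid.bot_def] at h
      have hxy : x = y := by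
        have := congrArg PM.neg h; rwa [PM.neg_neg, PM.neg_neg] at this
      subst hxy; exact (⊥ : Setoid (PM n)).refl _
  mul_mem' := fun ha hb => isSigned_sup ha hb

theorem finsetSup_mem {α β : Type*} (S : Submonoid (Setoid α)) (F : Finset β)
    (f : β → Setoid α) (h : ∀ b ∈ F, f b ∈ S) : F.sup f ∈ S := by
  classical
  induction F using Finset.induction_on with
  | empty =>
    rw [Finset.sup_empty]
    exact S.one_mem
  | insert _ _ hb ih =>
    rw [Finset.sup_insert]
    exact S.mul_mem (h _ (Finset.mem_insert_self _ _))
      (ih fun b hbF => h b (Finset.mem_insert_of_mem hbF))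

theorem closure_eq_signed (n : ℕ) :
    (Submonoid.closure (En n) : Set (Setoid (PM n))) = {I | IsSigned I} := by
  apply Set.Subset.antisymm
  · intro I hI
    have hle : Submonoid.closure (En n) ≤ signedSubmonoid n := by
      apply Submonoid.closure_le.mpr
      rintro x ⟨i, j, hij, rfl⟩
      exact eps_signed i j
    exact hle hI
  · intro I hI
    classical
    set F : Finset (PM n × PM n) :=
      (Set.toFinite {p : PM n × PM n | p.1 < p.2 ∧ I p.1 p.2}).toFinset with hF
    have hmemF : ∀ p : PM n × PM n, p ∈ F ↔ p.1 < p.2 ∧ I p.1 p.2 := by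
      intro p; rw [hF, Set.Finite.mem_toFinset]; rfl
    have hIeq : I = F.sup (fun p => eps p.1 p.2) := by
      apply le_antisymm
      · rw [Setoid.le_def]
        intro x y hxy
        rcases lt_trichotomy x y with hlt | heq | hgt
        · have hmem : (x, y) ∈ F := (hmemF (x, y)).mpr ⟨hlt, hxy⟩
          refine Setoid.le_def.mp (Finset.le_sup hmem) ?_
          rw [eps_iff]
          exact Or.inr (Or.inl ⟨Or.inl rfl, Or.inr rfl⟩)
        · subst heq; exact (F.sup fun p => eps p.1 p.2).refl x
        · have hmem : (y, x) ∈ F := (hmemF (y, x)).mpr ⟨hgt, I.symm hxy⟩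
          refine Setoid.le_def.mp (Finset.le_sup hmem) ?_
          rw [eps_iff]
          exact Or.inr (Or.inl ⟨Or.inr rfl, Or.inl rfl⟩)
      · apply Finset.sup_le
        intro p hp
        obtain ⟨hlt, hrel⟩ := (hmemF p).mp hp
        apply sup_le
        · apply mu_le
          exact I.symm ((hI p.1 p.2).mp hrel)
        · exact mu_le hrel
    rw [hIeq]
    have : F.sup (fun p => eps p.1 p.2) ∈ Submonoid.closure (En n) := by
      apply finsetSup_mem
      intro p hp
      obtain ⟨hlt, _⟩ := (hmemF p).mp hp
      exact Submonoid.subset_closure ⟨p.1, p.2, hlt, rfl⟩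
    exact this

end Gen

section Card

/-- Canonical domain of pairs for `eps`. -/
def Dset (n : ℕ) : Set (PM n × PM n) :=
  {p | 0 < p.2.1 ∧ -p.2.1 ≤ p.1.1 ∧ p.1.1 < p.2.1}

theorem En_eq_image (n : ℕ) :
    En n = (fun p : PM n × PM n => eps p.1 p.2) '' Dset n := by
  ext x
  constructor
  · rintro ⟨i, j, hij, rfl⟩
    have hij' : i.1 < j.1 := Subtype.coe_lt_coe.mpr hij
    have hi := i.2.1
    have hj := j.2.1
    by_cases h : 0 < j.1 ∧ -j.1 ≤ i.1
    · exact ⟨(i, j), ⟨h.1, h.2, hij'⟩, rfl⟩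
    · refine ⟨(j.neg, i.neg), ⟨?_, ?_, ?_⟩, ?_⟩
      · show (0 : ℤ) < -i.1; omega
      · show -(-i.1) ≤ -j.1; omega
      · show -j.1 < -i.1; omega
      · exact eps_neg i j
  · rintro ⟨⟨i, j⟩, ⟨h1, h2, h3⟩, rfl⟩
    exact ⟨i, j, Subtype.coe_lt_coe.mp h3, rfl⟩

theorem eps_injOn (n : ℕ) :
    Set.InjOn (fun p : PM n × PM n => eps p.1 p.2) (Dset n) := by
  rintro ⟨i, j⟩ ⟨hj, hij1, hij2⟩ ⟨k, l⟩ ⟨hl, hkl1, hkl2⟩ heq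
  simp only at heq hj hij1 hij2 hl hkl1 hkl2
  have h1 : eps k l i j := by
    rw [← heq, eps_iff]
    exact Or.inr (Or.inl ⟨Or.inl rfl, Or.inr rfl⟩)
  rw [eps_iff, epsRel_val] at h1
  have hi0 := i.2.1
  have hj0 := j.2.1
  have hk0 := k.2.1
  have hl0 := l.2.1
  have hvals : i.1 = k.1 ∧ j.1 = l.1 := by omega
  exact Prod.ext (Subtype.ext hvals.1) (Subtype.ext hvals.2)

/-- The integer-coordinate version of `Dset`. -/
def Dset' (n : ℕ) : Set (ℤ × ℤ) :=
  {q | q.1 ≠ 0 ∧ 0 < q.2 ∧ q.2 ≤ (n : ℤ) ∧ -q.2 ≤ q.1 ∧ q.1 < q.2}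

theorem Dset_val (n : ℕ) :
    (fun p : PM n × PM n => (p.1.1, p.2.1)) '' Dset n = Dset' n := by
  ext ⟨a, b⟩
  constructor
  · rintro ⟨⟨i, j⟩, ⟨h1, h2, h3⟩, heq⟩
    simp only [Prod.mk.injEq] at heq
    obtain ⟨rfl, rfl⟩ := heq
    have hi := i.2.1
    have hiabs := abs_le.mp i.2.2
    have hjabs := abs_le.mp j.2.2
    exact ⟨hi, h1, hjabs.2, h2, h3⟩
  · rintro ⟨h0, hb, hbn, h1, h2⟩
    refine ⟨(⟨a, h0, abs_le.mpr ⟨by omega, by omega⟩⟩, ⟨b, by omega, abs_le.mpr ⟨by omega, by omega⟩⟩),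
      ⟨hb, h1, h2⟩, rfl⟩

theorem Dset'_eq_finset (n : ℕ) :
    Dset' n = ↑((Finset.Icc (-(n : ℤ)) n ×ˢ Finset.Icc 1 (n : ℤ)).filter
      (fun q => q.1 ≠ 0 ∧ -q.2 ≤ q.1 ∧ q.1 < q.2)) := by
  ext ⟨a, b⟩
  simp only [Dset', Set.mem_setOf_eq, Finset.coe_filter, Finset.mem_product, Finset.mem_Icc]
  constructor
  · rintro ⟨h0, hb, hbn, h1, h2⟩
    exact ⟨⟨⟨by omega, by omega⟩, by omega, hbn⟩, h0, h1, h2⟩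
  · rintro ⟨⟨⟨ha1, ha2⟩, hb1, hb2⟩, h0, h1, h2⟩
    exact ⟨h0, by omega, hb2, h1, h2⟩

theorem gauss_sum : ∀ m : ℕ, (∑ b ∈ Finset.Icc (1 : ℤ) (m : ℤ), ((2 * b).toNat - 1)) = m ^ 2 := by
  intro m
  induction m with
  | zero => simp
  | succ m ih =>
    have hins : Finset.Icc (1 : ℤ) ((m : ℕ) + 1 : ℕ) = insert ((m : ℤ) + 1) (Finset.Icc 1 (m : ℤ)) := by
      ext x
      simp only [Finset.mem_Icc, Finset.mem_insert]
      push_cast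
      omega
    rw [hins, Finset.sum_insert (by simp only [Finset.mem_Icc]; omega), ih]
    have h1 : (2 * ((m : ℤ) + 1)).toNat - 1 = 2 * m + 1 := by omega
    have h2 : (m + 1) ^ 2 = m ^ 2 + (2 * m + 1) := by ring
    rw [h1, h2]
    omega

theorem card_filter_eq (n : ℕ) :
    ((Finset.Icc (-(n : ℤ)) n ×ˢ Finset.Icc 1 (n : ℤ)).filter
      (fun q => q.1 ≠ 0 ∧ -q.2 ≤ q.1 ∧ q.1 < q.2)).card = n ^ 2 := by
  classical
  have hbi : (Finset.Icc (-(n : ℤ)) n ×ˢ Finset.Icc 1 (n : ℤ)).filter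
      (fun q => q.1 ≠ 0 ∧ -q.2 ≤ q.1 ∧ q.1 < q.2) =
      (Finset.Icc (1 : ℤ) n).biUnion
        (fun b => ((Finset.Icc (-b) (b - 1)).erase 0).image (fun a => (a, b))) := by
    ext ⟨a, b⟩
    simp only [Finset.mem_filter, Finset.mem_product, Finset.mem_Icc, Finset.mem_biUnion,
      Finset.mem_image, Finset.mem_erase, Prod.mk.injEq]
    constructor
    · rintro ⟨⟨⟨ha1, ha2⟩, hb1, hb2⟩, h0, h1, h2⟩
      exact ⟨b, ⟨hb1, hb2⟩, a, ⟨h0, by omega, by omega⟩, rfl, rfl⟩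
    · rintro ⟨b', ⟨hb1, hb2⟩, a', ⟨h0, ha1, ha2⟩, rfl, rfl⟩
      refine ⟨⟨⟨by omega, by omega⟩, hb1, hb2⟩, h0, by omega, by omega⟩
  rw [hbi, Finset.card_biUnion]
  · have hterm : ∀ b ∈ Finset.Icc (1 : ℤ) (n : ℤ),
        (((Finset.Icc (-b) (b - 1)).erase 0).image (fun a => (a, b))).card
          = (2 * b).toNat - 1 := by
      intro b hb
      rw [Finset.mem_Icc] at hb
      rw [Finset.card_image_of_injective _ (fun a a' h => (Prod.mk.injEq _ _ _ _).mp h |>.1),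
        Finset.card_erase_of_mem (by rw [Finset.mem_Icc]; omega), Int.card_Icc]
      congr 1
      omega
    rw [Finset.sum_congr rfl hterm]
    exact gauss_sum n
  · intro x hx y hy hxy
    simp only [Finset.disjoint_left, Finset.mem_image]
    rintro ⟨a, b⟩ ⟨a1, h1, heq1⟩ ⟨a2, h2, heq2⟩
    apply hxy
    rw [Prod.mk.injEq] at heq1 heq2
    omega

theorem En_ncard (n : ℕ) : (En n).ncard = n ^ 2 := by
  rw [En_eq_image, Set.ncard_image_of_injOn (eps_injOn n)]
  have hinj : Set.InjOn (fun p : PM n × PM n => (p.1.1, p.2.1)) (Dset n) := by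
    intro p _ q _ h
    rw [Prod.mk.injEq] at h
    exact Prod.ext (Subtype.ext h.1) (Subtype.ext h.2)
  rw [← Set.ncard_image_of_injOn hinj, Dset_val, Dset'_eq_finset, Set.ncard_coe_finset]
  exact card_filter_eq n
end Card


/-- `Eₙ` generates the monoid `SPₙ` of signed partitions of `[±n]`
(the submonoid generated by `Eₙ` is exactly the set of signed partitions), and
`|Eₙ| = n²`. -/
theorem En_generates_SPn_and_card (n : ℕ) (hn : 2 ≤ n) :
    (Submonoid.closure (En n) : Set (Setoid (PM n))) = {I | IsSigned I} ∧
      (En n).ncard = n ^ 2 := by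
  exact ⟨closure_eq_signed n, En_ncard n⟩
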